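/- Let G be block-decomposable and let o be a node with exactly three outgoing edges and no incoming edges (or exactly three incoming edges and no outgoing edges). Then in every block decomposition of G none of the three edges incident to o belongs to a triangle, diamond, or square block; instead two of them form a fork block with outlet o and the third is a spike block. In particular at most one of the three neighbors of o has degree greater than 1 in G. -/

import Mathlib

/-- The six block shapes: spike, triangle, infork, outfork, diamond, square. -/
inductive BlockShape : Type
  | spike | triangle | infork | outfork | diamond | square
  deriving DecidableEq

namespace BlockShape

/-- Number of nodes of each block shape. -/
def numNodes : BlockShape → ℕ
  | spike => 2
  | triangle => 3
  | infork => 3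
  | outfork => 3
  | diamond => 4
  | square => 5

/-- The directed edges of each block shape.
For the spike the nodes are `x = 0, y = 1` with edge `x → y`.
For the triangle the nodes are `0, 1, 2` with edges `0 → 1 → 2 → 0`.
For the infork the nodes are `x = 0, y = 1, c = 2` with edges `x → c`, `y → c`.
For the outfork the nodes are `x = 0, y = 1, c = 2` with edges `c → x`, `c → y`.
For the diamond the nodes are `p = 0, q = 1, x = 2, y = 3` with boundary edges
`p → x, x → q, q → y, y → p` and mid-edge `q → p`.
For the square the nodes are the center `c = 0` and corners `v1 = 1, …, v4 = 4`, with
edges `v1 → v2 → v3 → v4 → v1`, `c → v1`, `v2 → c`, `c → v3`, `v4 → c`. -/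
def edges : (s : BlockShape) → List (Fin s.numNodes × Fin s.numNodes)
  | spike => ([(0, 1)] : List (Fin 2 × Fin 2))
  | triangle => ([(0, 1), (1, 2), (2, 0)] : List (Fin 3 × Fin 3))
  | infork => ([(0, 2), (1, 2)] : List (Fin 3 × Fin 3))
  | outfork => ([(2, 0), (2, 1)] : List (Fin 3 × Fin 3))
  | diamond => ([(0, 2), (2, 1), (1, 3), (3, 0), (1, 0)] : List (Fin 4 × Fin 4))
  | square => ([(1, 2), (2, 3), (3, 4), (4, 1), (0, 1), (2, 0), (0, 3), (4, 0)] :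
      List (Fin 5 × Fin 5))

/-- The outlets (white nodes) of each block shape. -/
def IsOutlet : (s : BlockShape) → Fin s.numNodes → Prop
  | spike, _ => True
  | triangle, _ => True
  | infork, i => (i : ℕ) = 2
  | outfork, i => (i : ℕ) = 2
  | diamond, i => (i : ℕ) = 0 ∨ (i : ℕ) = 1
  | square, i => (i : ℕ) = 0

/-- The degree of a node inside its block (number of incident edges). -/
def blockDeg (s : BlockShape) (i : Fin s.numNodes) : ℕ :=
  s.edges.countP fun e => decide (e.1 = i) || decide (e.2 = i)

end BlockShape

/-- A directed multigraph on a vertex type `V` is given by its edge multiplicity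
function `G : V → V → ℕ`.  It is a directed graph in our sense if it has no loops
and no 2-cycles. -/
def IsDiGraph {V : Type} (G : V → V → ℕ) : Prop :=
  (∀ v, G v v = 0) ∧ ∀ x y, G x y = 0 ∨ G y x = 0

/-- Degree of a node: the number of incident edges counted with multiplicity. -/
def degree {V : Type} [Fintype V] (G : V → V → ℕ) (v : V) : ℕ :=
  ∑ w, (G v w + G w v)

/-- Two nodes are adjacent if some edge joins them (in either direction). -/
def Adj {V : Type} (G : V → V → ℕ) (x y : V) : Prop := 0 < G x y + G y x

/-- `Reach G x y` : `y` lies in the connected component of `x`. -/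
def Reach {V : Type} (G : V → V → ℕ) : V → V → Prop := Relation.ReflTransGen (Adj G)

/-- The connected component of a node, as a finset. -/
noncomputable def component {V : Type} [Fintype V] (G : V → V → ℕ) (v : V) : Finset V :=
  letI := Classical.decPred fun w => Reach G v w
  Finset.univ.filter (Reach G v)

/-- Total number of block edges mapped onto the ordered pair `(x, y)` by the gluing data. -/
def blockMult {V : Type} [DecidableEq V] (n : ℕ) (shape : Fin n → BlockShape)
    (emb : (b : Fin n) → Fin (shape b).numNodes → V) (x y : V) : ℕ :=
  ∑ b : Fin n, (shape b).edges.countP fun e => decide (emb b e.1 = x ∧ emb b e.2 = y)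

/-- A block decomposition of the directed multigraph `G` : a finite collection of blocks
together with an identification of their nodes with the nodes of `G` such that
* each block is embedded injectively,
* nodes of two distinct blocks may be identified only if both are outlets,
* each outlet is identified with at most one other outlet (no vertex lies in three blocks),
* every vertex of `G` comes from some block, and
* the multiplicity of each edge of `G` is the number of block edges giving it minus the
  number of block edges giving the reversed edge (two parallel edges with the same
  direction are kept as a double edge; two parallel edges with opposite directions
  annihilate each other). -/
structure BlockDecomposition {V : Type} [Fintype V] [DecidableEq V] (G : V → V → ℕ) :
    Type where
  n : ℕ
  shape : Fin n → BlockShape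
  emb : (b : Fin n) → Fin (shape b).numNodes → V
  emb_inj : ∀ b, Function.Injective (emb b)
  glue_outlets : ∀ (b c : Fin n) (i : Fin (shape b).numNodes) (j : Fin (shape c).numNodes),
    emb b i = emb c j → b ≠ c → (shape b).IsOutlet i ∧ (shape c).IsOutlet j
  atMostTwo : ∀ (b c d : Fin n) (i : Fin (shape b).numNodes) (j : Fin (shape c).numNodes)
    (k : Fin (shape d).numNodes), emb b i = emb c j → emb b i = emb d k →
    b = c ∨ b = d ∨ c = d
  covers : ∀ v : V, ∃ b i, emb b i = v
  edge_eq : ∀ x y : V, G x y = blockMult n shape emb x y - blockMult n shape emb y x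

/-- The number of block edges of a decomposition lying over the ordered pair `(x, y)`. -/
def BlockDecomposition.mult {V : Type} [Fintype V] [DecidableEq V] {G : V → V → ℕ}
    (D : BlockDecomposition G) : V → V → ℕ :=
  blockMult D.n D.shape D.emb

/-- A graph is (block-)decomposable if it admits a block decomposition. -/
def Decomposable {V : Type} [Fintype V] [DecidableEq V] (G : V → V → ℕ) : Prop :=
  Nonempty (BlockDecomposition G)

/-- The edge `e` of block `b` is annihilated in the decomposition `D` : some edge of
another block lies over the same pair of vertices with the opposite direction. -/
def BlockDecomposition.EdgeAnnihilated {V : Type} [Fintype V] [DecidableEq V]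
    {G : V → V → ℕ} (D : BlockDecomposition G) (b : Fin D.n)
    (e : Fin (D.shape b).numNodes × Fin (D.shape b).numNodes) : Prop :=
  e ∈ (D.shape b).edges ∧
    ∃ (c : Fin D.n) (f : Fin (D.shape c).numNodes × Fin (D.shape c).numNodes),
      c ≠ b ∧ f ∈ (D.shape c).edges ∧ D.emb c f.1 = D.emb b e.2 ∧ D.emb c f.2 = D.emb b e.1
namespace StmtFourteen

open BlockShape

/-- out-degree of node `i` inside shape `s`. -/
def outD (s : BlockShape) (i : Fin s.numNodes) : ℕ :=
  s.edges.countP fun e => decide (e.1 = i)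

/-- in-degree of node `i` inside shape `s`. -/
def inD (s : BlockShape) (i : Fin s.numNodes) : ℕ :=
  s.edges.countP fun e => decide (e.2 = i)

instance : ∀ (s : BlockShape) (i : Fin s.numNodes), Decidable (s.IsOutlet i) := by
  intro s i; cases s <;> dsimp [BlockShape.IsOutlet] <;> infer_instance

lemma outD_le (s : BlockShape) (i : Fin s.numNodes) : outD s i ≤ inD s i + 2 := by
  cases s <;> revert i <;> decide

lemma inD_le (s : BlockShape) (i : Fin s.numNodes) : inD s i ≤ outD s i + 2 := by
  cases s <;> revert i <;> decide

lemma classify2 (s : BlockShape) (i : Fin s.numNodes) (h : s.IsOutlet i)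
    (h2 : outD s i = inD s i + 2) : s = outfork ∧ (i : ℕ) = 2 := by
  revert h h2; cases s <;> revert i <;> decide

lemma classify1 (s : BlockShape) (i : Fin s.numNodes) (h : s.IsOutlet i)
    (h2 : outD s i = inD s i + 1) :
    (s = spike ∧ (i : ℕ) = 0) ∨ (s = diamond ∧ (i : ℕ) = 1) := by
  revert h h2; cases s <;> revert i <;> decide

lemma classify2' (s : BlockShape) (i : Fin s.numNodes) (h : s.IsOutlet i)
    (h2 : inD s i = outD s i + 2) : s = infork ∧ (i : ℕ) = 2 := by
  revert h h2; cases s <;> revert i <;> decide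

lemma classify1' (s : BlockShape) (i : Fin s.numNodes) (h : s.IsOutlet i)
    (h2 : inD s i = outD s i + 1) :
    (s = spike ∧ (i : ℕ) = 1) ∨ (s = diamond ∧ (i : ℕ) = 0) := by
  revert h h2; cases s <;> revert i <;> decide

lemma outfork_edge (s : BlockShape) (h : s = outfork) :
    ∀ e ∈ s.edges, (e.1 : ℕ) = 2 ∧ ((e.2 : ℕ) = 0 ∨ (e.2 : ℕ) = 1) := by
  subst h; decide

lemma infork_edge (s : BlockShape) (h : s = infork) :
    ∀ e ∈ s.edges, (e.2 : ℕ) = 2 ∧ ((e.1 : ℕ) = 0 ∨ (e.1 : ℕ) = 1) := by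
  subst h; decide

lemma spike_edge (s : BlockShape) (h : s = spike) :
    ∀ e ∈ s.edges, (e.1 : ℕ) = 0 ∧ (e.2 : ℕ) = 1 := by
  subst h; decide

lemma diamond_from_one (s : BlockShape) (h : s = diamond) :
    ∀ e ∈ s.edges, (e.1 : ℕ) = 1 → (e.2 : ℕ) ≠ 2 := by
  subst h; decide

lemma diamond_to_zero (s : BlockShape) (h : s = diamond) :
    ∀ e ∈ s.edges, (e.2 : ℕ) = 0 → (e.1 : ℕ) ≠ 2 := by
  subst h; decide

lemma diamond_has21 (s : BlockShape) (h : s = diamond) :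
    ∃ e ∈ s.edges, (e.1 : ℕ) = 2 ∧ (e.2 : ℕ) = 1 := by
  subst h; decide

lemma diamond_has02 (s : BlockShape) (h : s = diamond) :
    ∃ e ∈ s.edges, (e.1 : ℕ) = 0 ∧ (e.2 : ℕ) = 2 := by
  subst h; decide

lemma not_outlet_outfork (s : BlockShape) (h : s = outfork) :
    ∀ i : Fin s.numNodes, (i : ℕ) = 0 ∨ (i : ℕ) = 1 → ¬ s.IsOutlet i := by
  subst h; decide

lemma not_outlet_infork (s : BlockShape) (h : s = infork) :
    ∀ i : Fin s.numNodes, (i : ℕ) = 0 ∨ (i : ℕ) = 1 → ¬ s.IsOutlet i := by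
  subst h; decide

lemma deg_sum_outfork (s : BlockShape) (h : s = outfork) :
    ∀ i : Fin s.numNodes, (i : ℕ) = 0 ∨ (i : ℕ) = 1 → outD s i + inD s i = 1 := by
  subst h; decide

lemma deg_sum_infork (s : BlockShape) (h : s = infork) :
    ∀ i : Fin s.numNodes, (i : ℕ) = 0 ∨ (i : ℕ) = 1 → outD s i + inD s i = 1 := by
  subst h; decide

lemma sum_countP_right {α V : Type} [Fintype V] [DecidableEq V] (l : List α)
    (p : α → Bool) (f : α → V) :
    ∑ w : V, l.countP (fun e => p e && decide (f e = w)) = l.countP p := by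
  induction l with
  | nil => simp
  | cons a t ih =>
    simp only [List.countP_cons]
    rw [Finset.sum_add_distrib, ih]
    congr 1
    by_cases hp : p a = true
    · simp [hp, Finset.sum_ite_eq]
    · simp [hp]

variable {V : Type} [Fintype V] [DecidableEq V] {G : V → V → ℕ}

lemma sum_mult_out (D : BlockDecomposition G) (v : V) :
    ∑ x, D.mult v x
      = ∑ b, (D.shape b).edges.countP fun e => decide (D.emb b e.1 = v) := by
  unfold BlockDecomposition.mult blockMult
  rw [Finset.sum_comm]
  refine Finset.sum_congr rfl fun b _ => ?_
  rw [← sum_countP_right ((D.shape b).edges) (fun e => decide (D.emb b e.1 = v))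
        (fun e => D.emb b e.2)]
  refine Finset.sum_congr rfl fun x _ => List.countP_congr fun e _ => by simp

lemma sum_mult_in (D : BlockDecomposition G) (v : V) :
    ∑ x, D.mult x v
      = ∑ b, (D.shape b).edges.countP fun e => decide (D.emb b e.2 = v) := by
  unfold BlockDecomposition.mult blockMult
  rw [Finset.sum_comm]
  refine Finset.sum_congr rfl fun b _ => ?_
  rw [← sum_countP_right ((D.shape b).edges) (fun e => decide (D.emb b e.2 = v))
        (fun e => D.emb b e.1)]
  refine Finset.sum_congr rfl fun x _ => List.countP_congr fun e _ => by
    simp [and_comm]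

lemma countA (D : BlockDecomposition G) (b : Fin D.n) (i : Fin (D.shape b).numNodes)
    (o : V) (h : D.emb b i = o) :
    ((D.shape b).edges.countP fun e => decide (D.emb b e.1 = o)) = outD (D.shape b) i := by
  subst h
  exact List.countP_congr fun e _ => by simp [(D.emb_inj b).eq_iff]

lemma countB (D : BlockDecomposition G) (b : Fin D.n) (i : Fin (D.shape b).numNodes)
    (o : V) (h : D.emb b i = o) :
    ((D.shape b).edges.countP fun e => decide (D.emb b e.2 = o)) = inD (D.shape b) i := by
  subst h
  exact List.countP_congr fun e _ => by simp [(D.emb_inj b).eq_iff]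

lemma countA_zero (D : BlockDecomposition G) (b : Fin D.n) (o : V)
    (h : ∀ k : Fin (D.shape b).numNodes, D.emb b k ≠ o) :
    ((D.shape b).edges.countP fun e => decide (D.emb b e.1 = o)) = 0 :=
  List.countP_eq_zero.mpr fun e _ => by simpa using h e.1

lemma countB_zero (D : BlockDecomposition G) (b : Fin D.n) (o : V)
    (h : ∀ k : Fin (D.shape b).numNodes, D.emb b k ≠ o) :
    ((D.shape b).edges.countP fun e => decide (D.emb b e.2 = o)) = 0 :=
  List.countP_eq_zero.mpr fun e _ => by simpa using h e.2

/-- If a node lies in only one block, its degree is bounded by its block degree. -/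
lemma deg_le (D : BlockDecomposition G) (b : Fin D.n) (l : Fin (D.shape b).numNodes)
    (honly : ∀ (c : Fin D.n) (j : Fin (D.shape c).numNodes),
      D.emb c j = D.emb b l → c = b) :
    degree G (D.emb b l) ≤ outD (D.shape b) l + inD (D.shape b) l := by
  have h1 : degree G (D.emb b l)
      ≤ (∑ x, D.mult (D.emb b l) x) + (∑ x, D.mult x (D.emb b l)) := by
    rw [← Finset.sum_add_distrib]
    unfold degree
    refine Finset.sum_le_sum fun x _ => ?_
    have e1 : G (D.emb b l) x = D.mult (D.emb b l) x - D.mult x (D.emb b l) :=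
      D.edge_eq _ x
    have e2 : G x (D.emb b l) = D.mult x (D.emb b l) - D.mult (D.emb b l) x :=
      D.edge_eq x _
    omega
  rw [sum_mult_out D, sum_mult_in D] at h1
  have h2 : (∑ c, (D.shape c).edges.countP fun e => decide (D.emb c e.1 = D.emb b l))
      = outD (D.shape b) l := by
    rw [Finset.sum_eq_single b
      (fun c _ hc => countA_zero D c _ (fun k hk => hc (honly c k hk)))
      (fun h => absurd (Finset.mem_univ b) h)]
    exact countA D b l _ rfl
  have h3 : (∑ c, (D.shape c).edges.countP fun e => decide (D.emb c e.2 = D.emb b l))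
      = inD (D.shape b) l := by
    rw [Finset.sum_eq_single b
      (fun c _ hc => countB_zero D c _ (fun k hk => hc (honly c k hk)))
      (fun h => absurd (Finset.mem_univ b) h)]
    exact countB D b l _ rfl
  omega

end StmtFourteen

namespace StmtFourteen
open BlockShape

variable {V : Type} [Fintype V] [DecidableEq V] {G : V → V → ℕ}

lemma engine_out (o : V) (h3 : (∑ w, G o w) = 3) (h0 : (∑ w, G w o) = 0)
    (D : BlockDecomposition G) :
    ∃ b b' : Fin D.n, b ≠ b' ∧
      D.shape b = BlockShape.outfork ∧ D.shape b' = BlockShape.spike ∧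
      (∃ i, D.emb b i = o ∧ (i : ℕ) = 2) ∧ (∃ j, D.emb b' j = o ∧ (j : ℕ) = 0) ∧
      (∀ (c : Fin D.n) (k : Fin (D.shape c).numNodes), D.emb c k = o →
        c = b ∨ c = b') := by
  have hGwo : ∀ w, G w o = 0 := fun w => (Finset.sum_eq_zero_iff.mp h0) w (Finset.mem_univ w)
  have hle : ∀ w, D.mult w o ≤ D.mult o w := by
    intro w
    have h : G w o = D.mult w o - D.mult o w := D.edge_eq w o
    rw [hGwo w] at h
    omega
  have hsum : ∑ w, D.mult o w = 3 + ∑ w, D.mult w o := by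
    have h1 : ∀ w, D.mult o w = G o w + D.mult w o := by
      intro w
      have h : G o w = D.mult o w - D.mult w o := D.edge_eq o w
      have := hle w
      omega
    calc ∑ w, D.mult o w = ∑ w, (G o w + D.mult w o) :=
          Finset.sum_congr rfl fun w _ => h1 w
      _ = 3 + ∑ w, D.mult w o := by rw [Finset.sum_add_distrib, h3]
  rw [sum_mult_out D o, sum_mult_in D o] at hsum
  obtain ⟨b₀, i₀, hb₀⟩ := D.covers o
  -- core argument once the two blocks are identified
  have core : ∀ (b b' : Fin D.n) (i : Fin (D.shape b).numNodes)
      (i' : Fin (D.shape b').numNodes), D.emb b i = o → D.emb b' i' = o → b ≠ b' →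
      (∀ (c : Fin D.n) (k : Fin (D.shape c).numNodes), D.emb c k = o → c = b ∨ c = b') →
      D.shape b = outfork → (i : ℕ) = 2 →
      ((D.shape b' = spike ∧ (i' : ℕ) = 0) ∨ (D.shape b' = diamond ∧ (i' : ℕ) = 1)) →
      ∃ b b' : Fin D.n, b ≠ b' ∧
        D.shape b = BlockShape.outfork ∧ D.shape b' = BlockShape.spike ∧
        (∃ i, D.emb b i = o ∧ (i : ℕ) = 2) ∧ (∃ j, D.emb b' j = o ∧ (j : ℕ) = 0) ∧
        (∀ (c : Fin D.n) (k : Fin (D.shape c).numNodes), D.emb c k = o →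
          c = b ∨ c = b') := by
    intro b b' i i' hi hi' hne hm hb hival hcase
    rcases hcase with ⟨hs', hi'val⟩ | ⟨hs', hi'val⟩
    · exact ⟨b, b', hne, hb, hs', ⟨i, hi, hival⟩, ⟨i', hi', hi'val⟩, hm⟩
    · exfalso
      obtain ⟨e, he, he1, he2⟩ := diamond_has21 _ hs'
      have he2' : e.2 = i' := Fin.ext (by rw [he2, hi'val])
      set w := D.emb b' e.1 with hw
      have h1 : 0 < D.mult w o := by
        have hterm : 0 < (D.shape b').edges.countP
            fun f => decide (D.emb b' f.1 = w ∧ D.emb b' f.2 = o) := by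
          rw [List.countP_pos_iff]
          exact ⟨e, he, by simp [← hw, he2', hi']⟩
        have hrw : D.mult w o = ∑ c : Fin D.n, (D.shape c).edges.countP
            fun f => decide (D.emb c f.1 = w ∧ D.emb c f.2 = o) := rfl
        rw [hrw]
        exact lt_of_lt_of_le hterm
          (Finset.single_le_sum (f := fun c : Fin D.n => (D.shape c).edges.countP
              fun f => decide (D.emb c f.1 = w ∧ D.emb c f.2 = o))
            (fun c _ => Nat.zero_le _) (Finset.mem_univ b'))
      have h2 : D.mult o w = 0 := by
        have hrw : D.mult o w = ∑ c : Fin D.n, (D.shape c).edges.countP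
            fun f => decide (D.emb c f.1 = o ∧ D.emb c f.2 = w) := rfl
        rw [hrw]
        apply Finset.sum_eq_zero
        intro c _
        apply List.countP_eq_zero.mpr
        intro f hf hpred
        rw [decide_eq_true_eq] at hpred
        obtain ⟨hf1, hf2⟩ := hpred
        rcases hm c f.1 hf1 with rfl | rfl
        · have hof := outfork_edge _ hb f hf
          have hglue := D.glue_outlets c b' f.2 e.1 hf2 hne
          exact not_outlet_outfork _ hb f.2 hof.2 hglue.1
        · have hf1' : f.1 = i' := D.emb_inj c (hf1.trans hi'.symm)
          have hne2 : (f.2 : ℕ) ≠ 2 :=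
            diamond_from_one _ hs' f hf (by rw [hf1', hi'val])
          have : f.2 = e.1 := D.emb_inj c hf2
          rw [this] at hne2
          exact hne2 he1
      have := hle w
      omega
  by_cases hone : ∀ (c : Fin D.n) (k : Fin (D.shape c).numNodes), D.emb c k = o → c = b₀
  · exfalso
    have hzero : ∀ c, c ≠ b₀ → ∀ (k : Fin (D.shape c).numNodes), D.emb c k ≠ o :=
      fun c hc k hk => hc (hone c k hk)
    have hA : (∑ b, (D.shape b).edges.countP fun e => decide (D.emb b e.1 = o))
        = outD (D.shape b₀) i₀ := by
      rw [Finset.sum_eq_single b₀ (fun c _ hc => countA_zero D c o (hzero c hc))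
        (fun h => absurd (Finset.mem_univ b₀) h)]
      exact countA D b₀ i₀ o hb₀
    have hB : (∑ b, (D.shape b).edges.countP fun e => decide (D.emb b e.2 = o))
        = inD (D.shape b₀) i₀ := by
      rw [Finset.sum_eq_single b₀ (fun c _ hc => countB_zero D c o (hzero c hc))
        (fun h => absurd (Finset.mem_univ b₀) h)]
      exact countB D b₀ i₀ o hb₀
    have := outD_le (D.shape b₀) i₀
    omega
  · push_neg at hone
    obtain ⟨b₁, k₁, hb₁, hne10⟩ := hone
    have hne01 : b₀ ≠ b₁ := fun h => hne10 h.symm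
    have hmem : ∀ (c : Fin D.n) (k : Fin (D.shape c).numNodes), D.emb c k = o →
        c = b₀ ∨ c = b₁ := by
      intro c k hk
      rcases D.atMostTwo c b₀ b₁ k i₀ k₁ (hk.trans hb₀.symm) (hk.trans hb₁.symm) with
        h | h | h
      · exact Or.inl h
      · exact Or.inr h
      · exact absurd h hne01
    have hzero : ∀ c, c ≠ b₀ → c ≠ b₁ → ∀ (k : Fin (D.shape c).numNodes),
        D.emb c k ≠ o := by
      intro c h0 h1 k hk
      rcases hmem c k hk with h | h <;> [exact h0 h; exact h1 h]
    have hglue := D.glue_outlets b₀ b₁ i₀ k₁ (hb₀.trans hb₁.symm) hne01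
    have hA : (∑ b, (D.shape b).edges.countP fun e => decide (D.emb b e.1 = o))
        = outD (D.shape b₀) i₀ + outD (D.shape b₁) k₁ := by
      have hsub : (∑ b ∈ ({b₀, b₁} : Finset (Fin D.n)),
          (D.shape b).edges.countP fun e => decide (D.emb b e.1 = o))
          = ∑ b, (D.shape b).edges.countP fun e => decide (D.emb b e.1 = o) :=
        Finset.sum_subset (Finset.subset_univ _) (fun c _ hc => by
          simp only [Finset.mem_insert, Finset.mem_singleton, not_or] at hc
          exact countA_zero D c o (hzero c hc.1 hc.2))
      rw [← hsub, Finset.sum_pair hne01, countA D b₀ i₀ o hb₀, countA D b₁ k₁ o hb₁]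
    have hB : (∑ b, (D.shape b).edges.countP fun e => decide (D.emb b e.2 = o))
        = inD (D.shape b₀) i₀ + inD (D.shape b₁) k₁ := by
      have hsub : (∑ b ∈ ({b₀, b₁} : Finset (Fin D.n)),
          (D.shape b).edges.countP fun e => decide (D.emb b e.2 = o))
          = ∑ b, (D.shape b).edges.countP fun e => decide (D.emb b e.2 = o) :=
        Finset.sum_subset (Finset.subset_univ _) (fun c _ hc => by
          simp only [Finset.mem_insert, Finset.mem_singleton, not_or] at hc
          exact countB_zero D c o (hzero c hc.1 hc.2))
      rw [← hsub, Finset.sum_pair hne01, countB D b₀ i₀ o hb₀, countB D b₁ k₁ o hb₁]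
    have hle0 := outD_le (D.shape b₀) i₀
    have hle1 := outD_le (D.shape b₁) k₁
    have hsplit : (outD (D.shape b₀) i₀ = inD (D.shape b₀) i₀ + 2 ∧
        outD (D.shape b₁) k₁ = inD (D.shape b₁) k₁ + 1) ∨
        (outD (D.shape b₀) i₀ = inD (D.shape b₀) i₀ + 1 ∧
        outD (D.shape b₁) k₁ = inD (D.shape b₁) k₁ + 2) := by omega
    rcases hsplit with ⟨h20, h11⟩ | ⟨h10, h21⟩
    · obtain ⟨hsf, hival⟩ := classify2 _ _ hglue.1 h20
      exact core b₀ b₁ i₀ k₁ hb₀ hb₁ hne01 hmem hsf hival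
        (classify1 _ _ hglue.2 h11)
    · obtain ⟨hsf, hival⟩ := classify2 _ _ hglue.2 h21
      have hmem' : ∀ (c : Fin D.n) (k : Fin (D.shape c).numNodes), D.emb c k = o →
          c = b₁ ∨ c = b₀ := fun c k hk => (hmem c k hk).symm
      exact core b₁ b₀ k₁ i₀ hb₁ hb₀ (Ne.symm hne01) hmem' hsf hival
        (classify1 _ _ hglue.1 h10)

end StmtFourteen

namespace StmtFourteen
open BlockShape

variable {V : Type} [Fintype V] [DecidableEq V] {G : V → V → ℕ}

lemma engine_in (o : V) (h3 : (∑ w, G w o) = 3) (h0 : (∑ w, G o w) = 0)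
    (D : BlockDecomposition G) :
    ∃ b b' : Fin D.n, b ≠ b' ∧
      D.shape b = BlockShape.infork ∧ D.shape b' = BlockShape.spike ∧
      (∃ i, D.emb b i = o ∧ (i : ℕ) = 2) ∧ (∃ j, D.emb b' j = o ∧ (j : ℕ) = 1) ∧
      (∀ (c : Fin D.n) (k : Fin (D.shape c).numNodes), D.emb c k = o →
        c = b ∨ c = b') := by
  have hGow : ∀ w, G o w = 0 := fun w => (Finset.sum_eq_zero_iff.mp h0) w (Finset.mem_univ w)
  have hle : ∀ w, D.mult o w ≤ D.mult w o := by
    intro w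
    have h : G o w = D.mult o w - D.mult w o := D.edge_eq o w
    rw [hGow w] at h
    omega
  have hsum : ∑ w, D.mult w o = 3 + ∑ w, D.mult o w := by
    have h1 : ∀ w, D.mult w o = G w o + D.mult o w := by
      intro w
      have h : G w o = D.mult w o - D.mult o w := D.edge_eq w o
      have := hle w
      omega
    calc ∑ w, D.mult w o = ∑ w, (G w o + D.mult o w) :=
          Finset.sum_congr rfl fun w _ => h1 w
      _ = 3 + ∑ w, D.mult o w := by rw [Finset.sum_add_distrib, h3]
  rw [sum_mult_out D o, sum_mult_in D o] at hsum
  obtain ⟨b₀, i₀, hb₀⟩ := D.covers o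
  have core : ∀ (b b' : Fin D.n) (i : Fin (D.shape b).numNodes)
      (i' : Fin (D.shape b').numNodes), D.emb b i = o → D.emb b' i' = o → b ≠ b' →
      (∀ (c : Fin D.n) (k : Fin (D.shape c).numNodes), D.emb c k = o → c = b ∨ c = b') →
      D.shape b = infork → (i : ℕ) = 2 →
      ((D.shape b' = spike ∧ (i' : ℕ) = 1) ∨ (D.shape b' = diamond ∧ (i' : ℕ) = 0)) →
      ∃ b b' : Fin D.n, b ≠ b' ∧
        D.shape b = BlockShape.infork ∧ D.shape b' = BlockShape.spike ∧
        (∃ i, D.emb b i = o ∧ (i : ℕ) = 2) ∧ (∃ j, D.emb b' j = o ∧ (j : ℕ) = 1) ∧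
        (∀ (c : Fin D.n) (k : Fin (D.shape c).numNodes), D.emb c k = o →
          c = b ∨ c = b') := by
    intro b b' i i' hi hi' hne hm hb hival hcase
    rcases hcase with ⟨hs', hi'val⟩ | ⟨hs', hi'val⟩
    · exact ⟨b, b', hne, hb, hs', ⟨i, hi, hival⟩, ⟨i', hi', hi'val⟩, hm⟩
    · exfalso
      obtain ⟨e, he, he1, he2⟩ := diamond_has02 _ hs'
      have he1' : e.1 = i' := Fin.ext (by rw [he1, hi'val])
      set w := D.emb b' e.2 with hw
      have h1 : 0 < D.mult o w := by
        have hterm : 0 < (D.shape b').edges.countP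
            fun f => decide (D.emb b' f.1 = o ∧ D.emb b' f.2 = w) := by
          rw [List.countP_pos_iff]
          exact ⟨e, he, by simp [← hw, he1', hi']⟩
        have hrw : D.mult o w = ∑ c : Fin D.n, (D.shape c).edges.countP
            fun f => decide (D.emb c f.1 = o ∧ D.emb c f.2 = w) := rfl
        rw [hrw]
        exact lt_of_lt_of_le hterm
          (Finset.single_le_sum (f := fun c : Fin D.n => (D.shape c).edges.countP
              fun f => decide (D.emb c f.1 = o ∧ D.emb c f.2 = w))
            (fun c _ => Nat.zero_le _) (Finset.mem_univ b'))
      have h2 : D.mult w o = 0 := by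
        have hrw : D.mult w o = ∑ c : Fin D.n, (D.shape c).edges.countP
            fun f => decide (D.emb c f.1 = w ∧ D.emb c f.2 = o) := rfl
        rw [hrw]
        apply Finset.sum_eq_zero
        intro c _
        apply List.countP_eq_zero.mpr
        intro f hf hpred
        rw [decide_eq_true_eq] at hpred
        obtain ⟨hf1, hf2⟩ := hpred
        rcases hm c f.2 hf2 with rfl | rfl
        · have hof := infork_edge _ hb f hf
          have hglue := D.glue_outlets c b' f.1 e.2 hf1 hne
          exact not_outlet_infork _ hb f.1 hof.2 hglue.1
        · have hf2' : f.2 = i' := D.emb_inj c (hf2.trans hi'.symm)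
          have hne2 : (f.1 : ℕ) ≠ 2 :=
            diamond_to_zero _ hs' f hf (by rw [hf2', hi'val])
          have : f.1 = e.2 := D.emb_inj c hf1
          rw [this] at hne2
          exact hne2 he2
      have := hle w
      omega
  by_cases hone : ∀ (c : Fin D.n) (k : Fin (D.shape c).numNodes), D.emb c k = o → c = b₀
  · exfalso
    have hzero : ∀ c, c ≠ b₀ → ∀ (k : Fin (D.shape c).numNodes), D.emb c k ≠ o :=
      fun c hc k hk => hc (hone c k hk)
    have hA : (∑ b, (D.shape b).edges.countP fun e => decide (D.emb b e.1 = o))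
        = outD (D.shape b₀) i₀ := by
      rw [Finset.sum_eq_single b₀ (fun c _ hc => countA_zero D c o (hzero c hc))
        (fun h => absurd (Finset.mem_univ b₀) h)]
      exact countA D b₀ i₀ o hb₀
    have hB : (∑ b, (D.shape b).edges.countP fun e => decide (D.emb b e.2 = o))
        = inD (D.shape b₀) i₀ := by
      rw [Finset.sum_eq_single b₀ (fun c _ hc => countB_zero D c o (hzero c hc))
        (fun h => absurd (Finset.mem_univ b₀) h)]
      exact countB D b₀ i₀ o hb₀
    have := inD_le (D.shape b₀) i₀
    omega
  · push_neg at hone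
    obtain ⟨b₁, k₁, hb₁, hne10⟩ := hone
    have hne01 : b₀ ≠ b₁ := fun h => hne10 h.symm
    have hmem : ∀ (c : Fin D.n) (k : Fin (D.shape c).numNodes), D.emb c k = o →
        c = b₀ ∨ c = b₁ := by
      intro c k hk
      rcases D.atMostTwo c b₀ b₁ k i₀ k₁ (hk.trans hb₀.symm) (hk.trans hb₁.symm) with
        h | h | h
      · exact Or.inl h
      · exact Or.inr h
      · exact absurd h hne01
    have hzero : ∀ c, c ≠ b₀ → c ≠ b₁ → ∀ (k : Fin (D.shape c).numNodes),
        D.emb c k ≠ o := by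
      intro c h0 h1 k hk
      rcases hmem c k hk with h | h <;> [exact h0 h; exact h1 h]
    have hglue := D.glue_outlets b₀ b₁ i₀ k₁ (hb₀.trans hb₁.symm) hne01
    have hA : (∑ b, (D.shape b).edges.countP fun e => decide (D.emb b e.1 = o))
        = outD (D.shape b₀) i₀ + outD (D.shape b₁) k₁ := by
      have hsub : (∑ b ∈ ({b₀, b₁} : Finset (Fin D.n)),
          (D.shape b).edges.countP fun e => decide (D.emb b e.1 = o))
          = ∑ b, (D.shape b).edges.countP fun e => decide (D.emb b e.1 = o) :=
        Finset.sum_subset (Finset.subset_univ _) (fun c _ hc => by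
          simp only [Finset.mem_insert, Finset.mem_singleton, not_or] at hc
          exact countA_zero D c o (hzero c hc.1 hc.2))
      rw [← hsub, Finset.sum_pair hne01, countA D b₀ i₀ o hb₀, countA D b₁ k₁ o hb₁]
    have hB : (∑ b, (D.shape b).edges.countP fun e => decide (D.emb b e.2 = o))
        = inD (D.shape b₀) i₀ + inD (D.shape b₁) k₁ := by
      have hsub : (∑ b ∈ ({b₀, b₁} : Finset (Fin D.n)),
          (D.shape b).edges.countP fun e => decide (D.emb b e.2 = o))
          = ∑ b, (D.shape b).edges.countP fun e => decide (D.emb b e.2 = o) :=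
        Finset.sum_subset (Finset.subset_univ _) (fun c _ hc => by
          simp only [Finset.mem_insert, Finset.mem_singleton, not_or] at hc
          exact countB_zero D c o (hzero c hc.1 hc.2))
      rw [← hsub, Finset.sum_pair hne01, countB D b₀ i₀ o hb₀, countB D b₁ k₁ o hb₁]
    have hle0 := inD_le (D.shape b₀) i₀
    have hle1 := inD_le (D.shape b₁) k₁
    have hsplit : (inD (D.shape b₀) i₀ = outD (D.shape b₀) i₀ + 2 ∧
        inD (D.shape b₁) k₁ = outD (D.shape b₁) k₁ + 1) ∨
        (inD (D.shape b₀) i₀ = outD (D.shape b₀) i₀ + 1 ∧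
        inD (D.shape b₁) k₁ = outD (D.shape b₁) k₁ + 2) := by omega
    rcases hsplit with ⟨h20, h11⟩ | ⟨h10, h21⟩
    · obtain ⟨hsf, hival⟩ := classify2' _ _ hglue.1 h20
      exact core b₀ b₁ i₀ k₁ hb₀ hb₁ hne01 hmem hsf hival
        (classify1' _ _ hglue.2 h11)
    · obtain ⟨hsf, hival⟩ := classify2' _ _ hglue.2 h21
      have hmem' : ∀ (c : Fin D.n) (k : Fin (D.shape c).numNodes), D.emb c k = o →
          c = b₁ ∨ c = b₀ := fun c k hk => (hmem c k hk).symm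
      exact core b₁ b₀ k₁ i₀ hb₁ hb₀ (Ne.symm hne01) hmem' hsf hival
        (classify1' _ _ hglue.1 h10)

end StmtFourteen

/-- if a node `o` of a block-decomposable graph has exactly three
outgoing edges and no incoming edges (resp. three incoming and no outgoing), then in
every block decomposition none of the three edges at `o` belongs to a triangle,
diamond or square block; instead two of them form a fork block with outlet `o` and
the third is a spike block.  In particular at most one of the three neighbors of `o`
has degree greater than 1. -/
theorem stmt_14 {V : Type} [Fintype V] [DecidableEq V] (G : V → V → ℕ)
    (hG : IsDiGraph G) (hdec : Decomposable G) (o : V) :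
    ((∑ w, G o w) = 3 ∧ (∑ w, G w o) = 0 →
      (∀ D : BlockDecomposition G,
        (∀ (c : Fin D.n) (k : Fin (D.shape c).numNodes), D.emb c k = o →
          D.shape c ≠ BlockShape.triangle ∧ D.shape c ≠ BlockShape.diamond ∧
          D.shape c ≠ BlockShape.square) ∧
        (∃ b b' : Fin D.n, b ≠ b' ∧
          D.shape b = BlockShape.outfork ∧ D.shape b' = BlockShape.spike ∧
          (∃ i, D.emb b i = o ∧ (i : ℕ) = 2) ∧ (∃ j, D.emb b' j = o ∧ (j : ℕ) = 0) ∧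
          (∀ (c : Fin D.n) (k : Fin (D.shape c).numNodes), D.emb c k = o →
            c = b ∨ c = b'))) ∧
      (∀ w w' : V, G o w ≠ 0 → G o w' ≠ 0 →
        1 < degree G w → 1 < degree G w' → w = w')) ∧
    ((∑ w, G w o) = 3 ∧ (∑ w, G o w) = 0 →
      (∀ D : BlockDecomposition G,
        (∀ (c : Fin D.n) (k : Fin (D.shape c).numNodes), D.emb c k = o →
          D.shape c ≠ BlockShape.triangle ∧ D.shape c ≠ BlockShape.diamond ∧
          D.shape c ≠ BlockShape.square) ∧
        (∃ b b' : Fin D.n, b ≠ b' ∧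
          D.shape b = BlockShape.infork ∧ D.shape b' = BlockShape.spike ∧
          (∃ i, D.emb b i = o ∧ (i : ℕ) = 2) ∧ (∃ j, D.emb b' j = o ∧ (j : ℕ) = 1) ∧
          (∀ (c : Fin D.n) (k : Fin (D.shape c).numNodes), D.emb c k = o →
            c = b ∨ c = b'))) ∧
      (∀ w w' : V, G w o ≠ 0 → G w' o ≠ 0 →
        1 < degree G w → 1 < degree G w' → w = w')) := by
  constructor
  · rintro ⟨h3, h0⟩
    constructor
    · intro D
      obtain ⟨b, b', hne, hsb, hsb', hex1, hex2, hmem⟩ :=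
        StmtFourteen.engine_out o h3 h0 D
      refine ⟨?_, b, b', hne, hsb, hsb', hex1, hex2, hmem⟩
      intro c k hk
      rcases hmem c k hk with rfl | rfl
      · simp [hsb]
      · simp [hsb']
    · intro w w' hw hw' hdw hdw'
      obtain ⟨D⟩ := hdec
      obtain ⟨b, b', hne, hsb, hsb', ⟨i, hi, hi2⟩, ⟨j, hj, hj0⟩, hmem⟩ :=
        StmtFourteen.engine_out o h3 h0 D
      have key : ∀ z, G o z ≠ 0 → 1 < degree G z →
          ∃ k : Fin (D.shape b').numNodes, (k : ℕ) = 1 ∧ D.emb b' k = z := by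
        intro z hz hdz
        have hmlt : D.mult o z ≠ 0 := by
          have h : G o z = D.mult o z - D.mult z o := D.edge_eq o z
          omega
        have hrw : D.mult o z = ∑ c : Fin D.n, (D.shape c).edges.countP
            fun f => decide (D.emb c f.1 = o ∧ D.emb c f.2 = z) := rfl
        rw [hrw] at hmlt
        obtain ⟨c, -, hc⟩ := Finset.exists_ne_zero_of_sum_ne_zero hmlt
        obtain ⟨e, he, hpe⟩ := List.countP_pos_iff.mp (Nat.pos_of_ne_zero hc)
        rw [decide_eq_true_eq] at hpe
        obtain ⟨he1, he2⟩ := hpe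
        rcases hmem c e.1 he1 with rfl | rfl
        · exfalso
          have hef := StmtFourteen.outfork_edge _ hsb e he
          have honly : ∀ (d : Fin D.n) (t : Fin (D.shape d).numNodes),
              D.emb d t = D.emb c e.2 → d = c := by
            intro d t ht
            by_contra hdc
            exact StmtFourteen.not_outlet_outfork _ hsb e.2 hef.2
              (D.glue_outlets c d e.2 t ht.symm (fun h => hdc h.symm)).1
          have hd := StmtFourteen.deg_le D c e.2 honly
          rw [he2] at hd
          have h1 := StmtFourteen.deg_sum_outfork _ hsb e.2 hef.2
          omega
        · have hef := StmtFourteen.spike_edge _ hsb' e he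
          exact ⟨e.2, hef.2, he2⟩
      obtain ⟨k, hk1, hkw⟩ := key w hw hdw
      obtain ⟨k', hk1', hkw'⟩ := key w' hw' hdw'
      rw [← hkw, ← hkw']
      congr 1
      exact Fin.ext (by rw [hk1, hk1'])
  · rintro ⟨h3, h0⟩
    constructor
    · intro D
      obtain ⟨b, b', hne, hsb, hsb', hex1, hex2, hmem⟩ :=
        StmtFourteen.engine_in o h3 h0 D
      refine ⟨?_, b, b', hne, hsb, hsb', hex1, hex2, hmem⟩
      intro c k hk
      rcases hmem c k hk with rfl | rfl
      · simp [hsb]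
      · simp [hsb']
    · intro w w' hw hw' hdw hdw'
      obtain ⟨D⟩ := hdec
      obtain ⟨b, b', hne, hsb, hsb', ⟨i, hi, hi2⟩, ⟨j, hj, hj1⟩, hmem⟩ :=
        StmtFourteen.engine_in o h3 h0 D
      have key : ∀ z, G z o ≠ 0 → 1 < degree G z →
          ∃ k : Fin (D.shape b').numNodes, (k : ℕ) = 0 ∧ D.emb b' k = z := by
        intro z hz hdz
        have hmlt : D.mult z o ≠ 0 := by
          have h : G z o = D.mult z o - D.mult o z := D.edge_eq z o
          omega
        have hrw : D.mult z o = ∑ c : Fin D.n, (D.shape c).edges.countP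
            fun f => decide (D.emb c f.1 = z ∧ D.emb c f.2 = o) := rfl
        rw [hrw] at hmlt
        obtain ⟨c, -, hc⟩ := Finset.exists_ne_zero_of_sum_ne_zero hmlt
        obtain ⟨e, he, hpe⟩ := List.countP_pos_iff.mp (Nat.pos_of_ne_zero hc)
        rw [decide_eq_true_eq] at hpe
        obtain ⟨he1, he2⟩ := hpe
        rcases hmem c e.2 he2 with rfl | rfl
        · exfalso
          have hef := StmtFourteen.infork_edge _ hsb e he
          have honly : ∀ (d : Fin D.n) (t : Fin (D.shape d).numNodes),
              D.emb d t = D.emb c e.1 → d = c := by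
            intro d t ht
            by_contra hdc
            exact StmtFourteen.not_outlet_infork _ hsb e.1 hef.2
              (D.glue_outlets c d e.1 t ht.symm (fun h => hdc h.symm)).1
          have hd := StmtFourteen.deg_le D c e.1 honly
          rw [he1] at hd
          have h1 := StmtFourteen.deg_sum_infork _ hsb e.1 hef.2
          omega
        · have hef := StmtFourteen.spike_edge _ hsb' e he
          exact ⟨e.1, hef.1, he1⟩
      obtain ⟨k, hk1, hkw⟩ := key w hw hdw
      obtain ⟨k', hk1', hkw'⟩ := key w' hw' hdw'
      rw [← hkw, ← hkw']
      congr 1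
      exact Fin.ext (by rw [hk1, hk1'])
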